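/- For every ε, δ ∈ (0,1), every m ≥ 1, every n ≥ 4κ (where κ = 1 + ⌈ln(1/δ̄)/ε̄⌉ with ε̄ = ε/3 and δ̄ = δ/(e^{2ε̄} + e^{ε̄} + 2)), and every algorithm A : Z^{(n−4κ)·m} → PMF(O), the algorithm DelStab_{ε,δ,A} : Z^{n·m} → PMF(O ∪ {⊥}) is (ε,δ)-user-level DP. -/

import Mathlib

open scoped BigOperators Classical

noncomputable section

/-- `P` is a probability mass function on a finite type. -/
def IsPMF {α : Type} [Fintype α] (P : α → ℝ) : Prop :=
  (∀ a, 0 ≤ P a) ∧ ∑ a, P a = 1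

/-- The `e^ε`-hockey-stick divergence between pmfs on a finite type. -/
def hsDiv {O : Type} [Fintype O] (ε : ℝ) (P Q : O → ℝ) : ℝ :=
  ∑ o, max (P o - Real.exp ε * Q o) 0

/-- `P ≈_{ε,δ} Q`: both hockey-stick divergences are at most `δ`. -/
def Indis {O : Type} [Fintype O] (ε δ : ℝ) (P Q : O → ℝ) : Prop :=
  hsDiv ε P Q ≤ δ ∧ hsDiv ε Q P ≤ δ

/-- User-level neighbors: the two inputs agree on all user blocks except possibly one. -/
def UserNeighbor {Z : Type} {n m : ℕ} (x x' : Fin n → Fin m → Z) : Prop :=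
  ∃ i, ∀ j, j ≠ i → x j = x' j

/-- Delete the blocks of the users in `T` (assumed of cardinality `k`) from `x`,
keeping the remaining blocks in order. -/
noncomputable def deleteUsers {Z : Type} [Nonempty Z] {n m : ℕ} (k : ℕ)
    (x : Fin n → Fin m → Z) (T : Finset (Fin n)) : Fin (n - k) → Fin m → Z :=
  if h : T.card = k then
    fun i j => x ((Tᶜ.orderIsoOfFin
      (by rw [Finset.card_compl, h, Fintype.card_fin]) i).1) j
  else fun _ _ => Classical.arbitrary Z

/-- `A` is `(4κ - |S|, ε̄, δ̄)`-local-deletion DP at `x_{-S}`: deleting any further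
user blocks of `x_{-S}`, passing from `S` to supersets `T, T'` of cardinality `4κ`,
yields `(ε̄,δ̄)`-indistinguishable outputs. -/
def LDDPDel {Z O : Type} [Fintype O] [Nonempty Z] {n m : ℕ} (κ : ℕ)
    (A : (Fin (n - 4 * κ) → Fin m → Z) → O → ℝ) (εb δb : ℝ)
    (x : Fin n → Fin m → Z) (S : Finset (Fin n)) : Prop :=
  ∀ T T' : Finset (Fin n), S ⊆ T → S ⊆ T' → T.card = 4 * κ → T'.card = 4 * κ →
    Indis εb δb (A (deleteUsers (4 * κ) x T)) (A (deleteUsers (4 * κ) x T'))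

/-- `X^r_stable(x)` as a finset. -/
noncomputable def stableFinset {Z O : Type} [Fintype O] [Nonempty Z] {n m : ℕ} (κ : ℕ)
    (A : (Fin (n - 4 * κ) → Fin m → Z) → O → ℝ) (εb δb : ℝ) (r : ℕ)
    (x : Fin n → Fin m → Z) : Finset (Finset (Fin n)) :=
  Finset.univ.filter fun S => S.card = r ∧ LDDPDel κ A εb δb x S

/-- The supersets of `S` of cardinality `4κ`. -/
noncomputable def supersets {n : ℕ} (κ : ℕ) (S : Finset (Fin n)) :
    Finset (Finset (Fin n)) :=
  Finset.univ.filter fun T => S ⊆ T ∧ T.card = 4 * κ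

/-- The shifted truncated discrete Laplace distribution `TDLap(ε̄, δ̄)` on
`{0, …, 2κ}`, with mass at `r` proportional to `exp(-ε̄·|r - κ|)`. -/
noncomputable def tdlap (εb : ℝ) (κ : ℕ) (r : ℕ) : ℝ :=
  if r ≤ 2 * κ then
    Real.exp (-(εb * |(r : ℝ) - κ|)) /
      ∑ j ∈ Finset.range (2 * κ + 1), Real.exp (-(εb * |(j : ℝ) - κ|))
  else 0

/-- The `DelStab` algorithm: sample `R₁ ∼ TDLap(ε̄,δ̄)`; if `X^{R₁}_stable(x) = ∅`
output `⊥` (i.e. `none`); otherwise pick `S ∈ X^{R₁}_stable(x)` uniformly, pick a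
uniform superset `T ⊇ S` with `|T| = 4κ`, and output a sample of `A(x_{-T})`. -/
noncomputable def DelStab {Z O : Type} [Fintype Z] [Fintype O] [Nonempty Z] {n m : ℕ}
    (κ : ℕ) (A : (Fin (n - 4 * κ) → Fin m → Z) → O → ℝ) (εb δb : ℝ)
    (x : Fin n → Fin m → Z) : Option O → ℝ := fun out =>
  ∑ r ∈ Finset.range (2 * κ + 1), tdlap εb κ r *
    (if stableFinset κ A εb δb r x = ∅ then (if out = none then 1 else 0)
     else ((stableFinset κ A εb δb r x).card : ℝ)⁻¹ *
       ∑ S ∈ stableFinset κ A εb δb r x,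
         ((supersets κ S).card : ℝ)⁻¹ *
           ∑ T ∈ supersets κ S, out.elim 0 (A (deleteUsers (4 * κ) x T)))

section HSLemmas

variable {O : Type} [Fintype O]

lemma hsDiv_le_sum (ε : ℝ) (P Q : O → ℝ) (hP : ∀ o, 0 ≤ P o) (hQ : ∀ o, 0 ≤ Q o) :
    hsDiv ε P Q ≤ ∑ o, P o := by
  refine Finset.sum_le_sum fun o _ => ?_
  exact max_le (sub_le_self _ (mul_nonneg (Real.exp_pos ε).le (hQ o))) (hP o)

lemma hsDiv_mono_right (ε : ℝ) (P Q Q' : O → ℝ) (h : ∀ o, Q o ≤ Q' o) :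
    hsDiv ε P Q' ≤ hsDiv ε P Q := by
  refine Finset.sum_le_sum fun o _ => ?_
  have : P o - Real.exp ε * Q' o ≤ P o - Real.exp ε * Q o := by
    have := mul_le_mul_of_nonneg_left (h o) (Real.exp_pos ε).le
    linarith
  exact max_le_max this le_rfl

lemma hsDiv_sum_le {ι : Type*} (ε : ℝ) (K : Finset ι) (f g : ι → O → ℝ) :
    hsDiv ε (fun o => ∑ k ∈ K, f k o) (fun o => ∑ k ∈ K, g k o) ≤
      ∑ k ∈ K, hsDiv ε (f k) (g k) := by
  unfold hsDiv
  rw [Finset.sum_comm]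
  refine Finset.sum_le_sum fun o _ => ?_
  refine max_le ?_ (Finset.sum_nonneg fun k _ => le_max_right _ _)
  rw [Finset.mul_sum, ← Finset.sum_sub_distrib]
  exact Finset.sum_le_sum fun k _ => le_max_left _ _

lemma hsDiv_const_mul (ε c : ℝ) (hc : 0 ≤ c) (P Q : O → ℝ) :
    hsDiv ε (fun o => c * P o) (fun o => c * Q o) = c * hsDiv ε P Q := by
  unfold hsDiv
  rw [Finset.mul_sum]
  refine Finset.sum_congr rfl fun o _ => ?_
  rw [mul_max_of_nonneg _ _ hc, mul_zero, mul_sub]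
  ring_nf

lemma hsDiv_self_le (ε : ℝ) (hε : 0 ≤ ε) (P : O → ℝ) (hP : ∀ o, 0 ≤ P o) :
    hsDiv ε P P ≤ 0 := by
  refine Finset.sum_nonpos fun o _ => ?_
  refine max_le ?_ le_rfl
  have h1 : P o ≤ Real.exp ε * P o := le_mul_of_one_le_left (hP o) (Real.one_le_exp hε)
  linarith

lemma hsDiv_scale_le (ε₁ ε₂ p q : ℝ) (P Q : O → ℝ) (hp : 0 ≤ p)
    (hQ : ∀ o, 0 ≤ Q o) (hpq : p ≤ Real.exp ε₁ * q) :
    hsDiv (ε₁ + ε₂) (fun o => p * P o) (fun o => q * Q o) ≤ p * hsDiv ε₂ P Q := by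
  unfold hsDiv
  rw [Finset.mul_sum]
  refine Finset.sum_le_sum fun o _ => ?_
  dsimp only
  rw [mul_max_of_nonneg _ _ hp, mul_zero, mul_sub]
  refine max_le_max ?_ le_rfl
  have h1 : Real.exp ε₂ * p * Q o ≤ Real.exp (ε₁ + ε₂) * (q * Q o) := by
    rw [Real.exp_add]
    have : Real.exp ε₂ * p ≤ Real.exp ε₂ * (Real.exp ε₁ * q) :=
      mul_le_mul_of_nonneg_left hpq (Real.exp_pos ε₂).le
    nlinarith [hQ o, Real.exp_pos ε₂]
  linarith

lemma hsDiv_triangle (ε₁ ε₂ : ℝ) (P Q R : O → ℝ) :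
    hsDiv (ε₁ + ε₂) P R ≤ hsDiv ε₁ P Q + Real.exp ε₁ * hsDiv ε₂ Q R := by
  unfold hsDiv
  rw [Finset.mul_sum, ← Finset.sum_add_distrib]
  refine Finset.sum_le_sum fun o _ => ?_
  have key : P o - Real.exp (ε₁ + ε₂) * R o =
      (P o - Real.exp ε₁ * Q o) + Real.exp ε₁ * (Q o - Real.exp ε₂ * R o) := by
    rw [Real.exp_add]; ring
  calc max (P o - Real.exp (ε₁ + ε₂) * R o) 0
      ≤ max (P o - Real.exp ε₁ * Q o) 0 +
        max (Real.exp ε₁ * (Q o - Real.exp ε₂ * R o)) 0 := by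
        rw [key]; exact max_le (add_le_add (le_max_left _ _) (le_max_left _ _))
          (add_nonneg (le_max_right _ _) (le_max_right _ _))
    _ = max (P o - Real.exp ε₁ * Q o) 0 +
        Real.exp ε₁ * max (Q o - Real.exp ε₂ * R o) 0 := by
        rw [mul_max_of_nonneg _ _ (Real.exp_pos ε₁).le, mul_zero]

lemma hsDiv_avg_left {ι : Type*} (ε c : ℝ) (K : Finset ι) (hK : K.Nonempty)
    (f : ι → O → ℝ) (Q : O → ℝ) (h : ∀ k ∈ K, hsDiv ε (f k) Q ≤ c) :
    hsDiv ε (fun o => (K.card : ℝ)⁻¹ * ∑ k ∈ K, f k o) Q ≤ c := by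
  have hcard : (K.card : ℝ) ≠ 0 :=
    Nat.cast_ne_zero.mpr (Finset.card_ne_zero_of_mem hK.choose_spec)
  have h1 : (fun o => (K.card : ℝ)⁻¹ * ∑ k ∈ K, f k o) =
      fun o => ∑ k ∈ K, (K.card : ℝ)⁻¹ * f k o := by
    funext o; rw [Finset.mul_sum]
  have h2 : Q = fun o => ∑ _k ∈ K, (K.card : ℝ)⁻¹ * Q o := by
    funext o
    rw [Finset.sum_const, nsmul_eq_mul, ← mul_assoc, mul_inv_cancel₀ hcard, one_mul]
  calc hsDiv ε (fun o => (K.card : ℝ)⁻¹ * ∑ k ∈ K, f k o) Q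
      = hsDiv ε (fun o => ∑ k ∈ K, (K.card : ℝ)⁻¹ * f k o)
          (fun o => ∑ _k ∈ K, (K.card : ℝ)⁻¹ * Q o) := by rw [← h1, ← h2]
    _ ≤ ∑ k ∈ K, hsDiv ε (fun o => (K.card : ℝ)⁻¹ * f k o)
          (fun o => (K.card : ℝ)⁻¹ * Q o) := hsDiv_sum_le ε K _ _
    _ = ∑ k ∈ K, (K.card : ℝ)⁻¹ * hsDiv ε (f k) Q := by
        refine Finset.sum_congr rfl fun k _ => hsDiv_const_mul ε _ (inv_nonneg.mpr (Nat.cast_nonneg _)) _ _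
    _ ≤ ∑ _k ∈ K, (K.card : ℝ)⁻¹ * c := by
        refine Finset.sum_le_sum fun k hk =>
          mul_le_mul_of_nonneg_left (h k hk) (inv_nonneg.mpr (Nat.cast_nonneg _))
    _ = c := by
        rw [Finset.sum_const, nsmul_eq_mul, ← mul_assoc, mul_inv_cancel₀ hcard, one_mul]

lemma hsDiv_avg_right {ι : Type*} (ε c : ℝ) (K : Finset ι) (hK : K.Nonempty)
    (P : O → ℝ) (g : ι → O → ℝ) (h : ∀ k ∈ K, hsDiv ε P (g k) ≤ c) :
    hsDiv ε P (fun o => (K.card : ℝ)⁻¹ * ∑ k ∈ K, g k o) ≤ c := by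
  have hcard : (K.card : ℝ) ≠ 0 :=
    Nat.cast_ne_zero.mpr (Finset.card_ne_zero_of_mem hK.choose_spec)
  have h1 : (fun o => (K.card : ℝ)⁻¹ * ∑ k ∈ K, g k o) =
      fun o => ∑ k ∈ K, (K.card : ℝ)⁻¹ * g k o := by
    funext o; rw [Finset.mul_sum]
  have h2 : P = fun o => ∑ _k ∈ K, (K.card : ℝ)⁻¹ * P o := by
    funext o
    rw [Finset.sum_const, nsmul_eq_mul, ← mul_assoc, mul_inv_cancel₀ hcard, one_mul]
  calc hsDiv ε P (fun o => (K.card : ℝ)⁻¹ * ∑ k ∈ K, g k o)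
      = hsDiv ε (fun o => ∑ _k ∈ K, (K.card : ℝ)⁻¹ * P o)
          (fun o => ∑ k ∈ K, (K.card : ℝ)⁻¹ * g k o) := by rw [← h1, ← h2]
    _ ≤ ∑ k ∈ K, hsDiv ε (fun o => (K.card : ℝ)⁻¹ * P o)
          (fun o => (K.card : ℝ)⁻¹ * g k o) := hsDiv_sum_le ε K _ _
    _ = ∑ k ∈ K, (K.card : ℝ)⁻¹ * hsDiv ε P (g k) := by
        refine Finset.sum_congr rfl fun k _ => hsDiv_const_mul ε _ (inv_nonneg.mpr (Nat.cast_nonneg _)) _ _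
    _ ≤ ∑ _k ∈ K, (K.card : ℝ)⁻¹ * c := by
        refine Finset.sum_le_sum fun k hk =>
          mul_le_mul_of_nonneg_left (h k hk) (inv_nonneg.mpr (Nat.cast_nonneg _))
    _ = c := by
        rw [Finset.sum_const, nsmul_eq_mul, ← mul_assoc, mul_inv_cancel₀ hcard, one_mul]

lemma hsDiv_option {O : Type} [Fintype O] (ε : ℝ) (P Q : O → ℝ) :
    hsDiv ε (fun o : Option O => o.elim 0 P) (fun o : Option O => o.elim 0 Q) =
      hsDiv ε P Q := by
  unfold hsDiv
  rw [Fintype.sum_option]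
  simp

end HSLemmas
section TDLap

variable (εb : ℝ) (κ : ℕ)

lemma tdlap_Z_pos : 0 < ∑ j ∈ Finset.range (2 * κ + 1), Real.exp (-(εb * |(j : ℝ) - κ|)) :=
  Finset.sum_pos (fun j _ => Real.exp_pos _) (Finset.nonempty_range_iff.mpr (by omega))

lemma tdlap_Z_ge_one : 1 ≤ ∑ j ∈ Finset.range (2 * κ + 1), Real.exp (-(εb * |(j : ℝ) - κ|)) := by
  have h := Finset.single_le_sum (f := fun j : ℕ => Real.exp (-(εb * |(j : ℝ) - κ|)))
    (s := Finset.range (2 * κ + 1))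
    (fun j _ => (Real.exp_pos _).le) (a := κ) (Finset.mem_range.mpr (by omega))
  simpa using h

lemma tdlap_nonneg (r : ℕ) : 0 ≤ tdlap εb κ r := by
  unfold tdlap
  split
  · exact div_nonneg (Real.exp_pos _).le (tdlap_Z_pos εb κ).le
  · exact le_rfl

lemma tdlap_sum : ∑ r ∈ Finset.range (2 * κ + 1), tdlap εb κ r = 1 := by
  have h : ∀ r ∈ Finset.range (2 * κ + 1), tdlap εb κ r =
      Real.exp (-(εb * |(r : ℝ) - κ|)) /
        ∑ j ∈ Finset.range (2 * κ + 1), Real.exp (-(εb * |(j : ℝ) - κ|)) := by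
    intro r hr
    unfold tdlap
    rw [if_pos (Finset.mem_range.mp hr |> Nat.lt_succ_iff.mp)]
  rw [Finset.sum_congr rfl h, ← Finset.sum_div, div_self (ne_of_gt (tdlap_Z_pos εb κ))]

lemma tdlap_le (r : ℕ) : tdlap εb κ r ≤ Real.exp (-(εb * |(r : ℝ) - κ|)) := by
  unfold tdlap
  split
  · exact div_le_self (Real.exp_pos _).le (tdlap_Z_ge_one εb κ)
  · exact (Real.exp_pos _).le

lemma tdlap_zero_le : tdlap εb κ 0 ≤ Real.exp (-(εb * κ)) := by
  have := tdlap_le εb κ 0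
  simpa using this

lemma tdlap_two_le : tdlap εb κ (2 * κ) ≤ Real.exp (-(εb * κ)) := by
  have := tdlap_le εb κ (2 * κ)
  have h2 : |((2 * κ : ℕ) : ℝ) - κ| = (κ : ℝ) := by
    push_cast
    rw [show (2 : ℝ) * κ - κ = κ by ring, abs_of_nonneg (by positivity)]
  rwa [h2] at this

lemma tdlap_ratio (hεb : 0 ≤ εb) (r s : ℕ) (hr : r ≤ 2 * κ) (hs : s ≤ 2 * κ)
    (hrs : |(r : ℝ) - s| ≤ 1) : tdlap εb κ r ≤ Real.exp εb * tdlap εb κ s := by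
  unfold tdlap
  rw [if_pos hr, if_pos hs, ← mul_div_assoc]
  refine div_le_div_of_nonneg_right ?_ (tdlap_Z_pos εb κ).le
  rw [← Real.exp_add]
  refine Real.exp_le_exp.mpr ?_
  have h1 : |(s : ℝ) - κ| - |(r : ℝ) - κ| ≤ |(r : ℝ) - s| := by
    have h0 := abs_sub_abs_le_abs_sub ((s : ℝ) - κ) ((r : ℝ) - κ)
    have he : |(s : ℝ) - κ - ((r : ℝ) - κ)| = |(r : ℝ) - s| := by
      rw [show (s : ℝ) - κ - ((r : ℝ) - κ) = -((r : ℝ) - s) by ring, abs_neg]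
    linarith [he ▸ h0]
  have h2 := mul_le_mul_of_nonneg_left (h1.trans hrs) hεb
  rw [mul_sub, mul_one] at h2
  linarith

end TDLap
section Assembly

variable {O : Type} [Fintype O]

lemma sum_option_elim (f : O → ℝ) : ∑ o : Option O, o.elim 0 f = ∑ o : O, f o := by
  rw [Fintype.sum_option]; simp

lemma hsDiv_assembly {ι : Type} [DecidableEq ι] (ε : ℝ) (K : Finset ι)
    (p q : ι → ℝ) (F G : ι → O → ℝ) (σ : ι → ι) (c : ι → ℝ)
    (hqg : ∀ k ∈ K, ∀ o, 0 ≤ q k * G k o)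
    (hinj : ∀ a ∈ K, σ a ∈ K → ∀ b ∈ K, σ b ∈ K → σ a = σ b → a = b)
    (hbound : ∀ k ∈ K, hsDiv ε (fun o => p k * F k o)
        (fun o => if σ k ∈ K then q (σ k) * G (σ k) o else 0) ≤ c k) :
    hsDiv ε (fun o => ∑ k ∈ K, p k * F k o) (fun o => ∑ k ∈ K, q k * G k o) ≤
      ∑ k ∈ K, c k := by
  have hQle : ∀ o, ∑ k ∈ K, (if σ k ∈ K then q (σ k) * G (σ k) o else 0) ≤
      ∑ k ∈ K, q k * G k o := by
    intro o
    have e1 : ∑ k ∈ K, (if σ k ∈ K then q (σ k) * G (σ k) o else 0) =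
        ∑ k ∈ K.filter (fun k => σ k ∈ K), q (σ k) * G (σ k) o :=
      (Finset.sum_filter _ _).symm
    have e2 : ∑ k ∈ K.filter (fun k => σ k ∈ K), q (σ k) * G (σ k) o =
        ∑ j ∈ (K.filter (fun k => σ k ∈ K)).image σ, q j * G j o := by
      rw [Finset.sum_image]
      intro a ha b hb hab
      exact hinj a (Finset.mem_filter.mp ha).1 (Finset.mem_filter.mp ha).2
        b (Finset.mem_filter.mp hb).1 (Finset.mem_filter.mp hb).2 hab
    rw [e1, e2]
    refine Finset.sum_le_sum_of_subset_of_nonneg ?_ ?_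
    · intro j hj
      obtain ⟨k, hk, rfl⟩ := Finset.mem_image.mp hj
      exact (Finset.mem_filter.mp hk).2
    · intro j hj _; exact hqg j hj o
  calc hsDiv ε (fun o => ∑ k ∈ K, p k * F k o) (fun o => ∑ k ∈ K, q k * G k o)
      ≤ hsDiv ε (fun o => ∑ k ∈ K, p k * F k o)
          (fun o => ∑ k ∈ K, if σ k ∈ K then q (σ k) * G (σ k) o else 0) :=
        hsDiv_mono_right ε _ _ _ hQle
    _ ≤ ∑ k ∈ K, hsDiv ε (fun o => p k * F k o)
          (fun o => if σ k ∈ K then q (σ k) * G (σ k) o else 0) :=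
        hsDiv_sum_le ε K _ _
    _ ≤ ∑ k ∈ K, c k := Finset.sum_le_sum hbound

end Assembly
section Combinatorial

variable {Z O : Type} [Fintype O] [Nonempty Z] {n m : ℕ}

lemma deleteUsers_congr (k : ℕ) (x x' : Fin n → Fin m → Z) (i : Fin n)
    (hi : ∀ j, j ≠ i → x j = x' j) (T : Finset (Fin n)) (hiT : i ∈ T) :
    deleteUsers k x T = deleteUsers k x' T := by
  unfold deleteUsers
  split
  case isTrue h =>
    funext a b
    have hne : ((Tᶜ.orderIsoOfFin
        (by rw [Finset.card_compl, h, Fintype.card_fin]) a).1) ≠ i := by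
      intro he
      have hmem := (Tᶜ.orderIsoOfFin
        (by rw [Finset.card_compl, h, Fintype.card_fin]) a).2
      rw [he] at hmem
      exact (Finset.mem_compl.mp hmem) hiT
    rw [hi _ hne]
  case isFalse => rfl

lemma lddp_mono {κ : ℕ} {A : (Fin (n - 4 * κ) → Fin m → Z) → O → ℝ} {εb δb : ℝ}
    {x : Fin n → Fin m → Z} {S S' : Finset (Fin n)} (hS : S ⊆ S')
    (h : LDDPDel κ A εb δb x S) : LDDPDel κ A εb δb x S' :=
  fun T T' h1 h2 hc hc' => h T T' (hS.trans h1) (hS.trans h2) hc hc'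

lemma lddp_transfer {κ : ℕ} {A : (Fin (n - 4 * κ) → Fin m → Z) → O → ℝ} {εb δb : ℝ}
    {x x' : Fin n → Fin m → Z} {i : Fin n} (hi : ∀ j, j ≠ i → x j = x' j)
    {S : Finset (Fin n)} (hiS : i ∈ S)
    (h : LDDPDel κ A εb δb x S) : LDDPDel κ A εb δb x' S := by
  intro T T' h1 h2 hc hc'
  rw [← deleteUsers_congr _ x x' i hi T (h1 hiS),
    ← deleteUsers_congr _ x x' i hi T' (h2 hiS)]
  exact h T T' h1 h2 hc hc'

lemma mem_stableFinset {κ : ℕ} {A : (Fin (n - 4 * κ) → Fin m → Z) → O → ℝ} {εb δb : ℝ}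
    {r : ℕ} {x : Fin n → Fin m → Z} {S : Finset (Fin n)} :
    S ∈ stableFinset κ A εb δb r x ↔ S.card = r ∧ LDDPDel κ A εb δb x S := by
  simp [stableFinset]

lemma stable_step {κ : ℕ} {A : (Fin (n - 4 * κ) → Fin m → Z) → O → ℝ} {εb δb : ℝ}
    (x x' : Fin n → Fin m → Z) (i : Fin n) (hi : ∀ j, j ≠ i → x j = x' j)
    (r : ℕ) (hr : r < n) (h : stableFinset κ A εb δb r x ≠ ∅) :
    stableFinset κ A εb δb (r + 1) x' ≠ ∅ := by
  obtain ⟨S, hS⟩ := Finset.nonempty_iff_ne_empty.mpr h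
  obtain ⟨hcard, hld⟩ := mem_stableFinset.mp hS
  by_cases hiS : i ∈ S
  · have hld' : LDDPDel κ A εb δb x' S := lddp_transfer hi hiS hld
    have hne : ∃ j, j ∉ S := by
      by_contra hco
      push_neg at hco
      have h2 : S = Finset.univ := Finset.eq_univ_iff_forall.mpr hco
      rw [h2, Finset.card_univ, Fintype.card_fin] at hcard
      omega
    obtain ⟨j, hj⟩ := hne
    refine Finset.nonempty_iff_ne_empty.mp ⟨insert j S, mem_stableFinset.mpr ?_⟩
    exact ⟨by rw [Finset.card_insert_of_notMem hj, hcard],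
      lddp_mono (Finset.subset_insert j S) hld'⟩
  · refine Finset.nonempty_iff_ne_empty.mp ⟨insert i S, mem_stableFinset.mpr ?_⟩
    refine ⟨by rw [Finset.card_insert_of_notMem hiS, hcard], ?_⟩
    exact lddp_transfer hi (Finset.mem_insert_self i S)
      (lddp_mono (Finset.subset_insert i S) hld)

lemma mem_supersets {κ : ℕ} {S T : Finset (Fin n)} :
    T ∈ supersets κ S ↔ S ⊆ T ∧ T.card = 4 * κ := by
  simp [supersets]

lemma supersets_nonempty {κ : ℕ} (hn : 4 * κ ≤ n) (S : Finset (Fin n))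
    (hS : S.card ≤ 4 * κ) : (supersets κ S).Nonempty := by
  obtain ⟨T, hT1, hT2⟩ := Finset.exists_superset_card_eq hS
    (by rw [Fintype.card_fin]; exact hn)
  exact ⟨T, mem_supersets.mpr ⟨hT1, hT2⟩⟩

/-- The conditional output distribution of `DelStab` given `R₁ = r`. -/
noncomputable def Gfun (κ : ℕ) (A : (Fin (n - 4 * κ) → Fin m → Z) → O → ℝ)
    (εb δb : ℝ) (x : Fin n → Fin m → Z) (r : ℕ) : Option O → ℝ := fun out =>
  if stableFinset κ A εb δb r x = ∅ then (if out = none then 1 else 0)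
  else ((stableFinset κ A εb δb r x).card : ℝ)⁻¹ *
    ∑ S ∈ stableFinset κ A εb δb r x,
      ((supersets κ S).card : ℝ)⁻¹ *
        ∑ T ∈ supersets κ S, out.elim 0 (A (deleteUsers (4 * κ) x T))

lemma DelStab_eq_Gfun [Fintype Z] (κ : ℕ) (A : (Fin (n - 4 * κ) → Fin m → Z) → O → ℝ)
    (εb δb : ℝ) (x : Fin n → Fin m → Z) :
    DelStab κ A εb δb x =
      fun out => ∑ r ∈ Finset.range (2 * κ + 1), tdlap εb κ r * Gfun κ A εb δb x r out :=
  rfl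

lemma Gfun_nonneg {κ : ℕ} {A : (Fin (n - 4 * κ) → Fin m → Z) → O → ℝ} {εb δb : ℝ}
    {x : Fin n → Fin m → Z} {r : ℕ} (hA : ∀ y, IsPMF (A y)) (out : Option O) :
    0 ≤ Gfun κ A εb δb x r out := by
  unfold Gfun
  have helim : ∀ y, (0:ℝ) ≤ out.elim 0 (A y) := by
    intro y; cases out
    · exact le_rfl
    · exact (hA y).1 _
  split
  · split <;> norm_num
  · refine mul_nonneg (by positivity) (Finset.sum_nonneg fun S _ => ?_)
    exact mul_nonneg (by positivity) (Finset.sum_nonneg fun T _ => helim _)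

lemma Gfun_mass {κ : ℕ} {A : (Fin (n - 4 * κ) → Fin m → Z) → O → ℝ} {εb δb : ℝ}
    {x : Fin n → Fin m → Z} {r : ℕ} (hA : ∀ y, IsPMF (A y))
    (hn : 4 * κ ≤ n) (hr : r ≤ 4 * κ) :
    ∑ out : Option O, Gfun κ A εb δb x r out = 1 := by
  unfold Gfun
  by_cases hst : stableFinset κ A εb δb r x = ∅
  · simp only [if_pos hst]
    rw [Fintype.sum_option]
    simp
  · simp only [if_neg hst]
    rw [← Finset.mul_sum, Finset.sum_comm]
    have hSmass : ∀ S ∈ stableFinset κ A εb δb r x,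
        (∑ out : Option O, ((supersets κ S).card : ℝ)⁻¹ *
          ∑ T ∈ supersets κ S, out.elim 0 (A (deleteUsers (4 * κ) x T))) = 1 := by
      intro S hS
      rw [← Finset.mul_sum, Finset.sum_comm]
      have hT : ∀ T ∈ supersets κ S,
          (∑ out : Option O, out.elim 0 (A (deleteUsers (4 * κ) x T))) = 1 := by
        intro T _
        rw [sum_option_elim]
        exact (hA _).2
      rw [Finset.sum_congr rfl hT, Finset.sum_const, nsmul_eq_mul, mul_one,
        inv_mul_cancel₀]
      have hSne := supersets_nonempty hn S (by rw [(mem_stableFinset.mp hS).1]; exact hr)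
      exact Nat.cast_ne_zero.mpr (Finset.card_ne_zero_of_mem hSne.choose_spec)
    rw [Finset.sum_congr rfl hSmass, Finset.sum_const, nsmul_eq_mul, mul_one,
      inv_mul_cancel₀]
    exact Nat.cast_ne_zero.mpr
      (Finset.card_ne_zero_of_mem (Finset.nonempty_iff_ne_empty.mpr hst).choose_spec)

lemma Gfun_close {κ : ℕ} {A : (Fin (n - 4 * κ) → Fin m → Z) → O → ℝ} {εb δb : ℝ}
    (hn : 4 * κ ≤ n) (x x' : Fin n → Fin m → Z) (i : Fin n)
    (hi : ∀ j, j ≠ i → x j = x' j) (r r' : ℕ) (hbud : r + r' + 1 ≤ 4 * κ)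
    (hx : stableFinset κ A εb δb r x ≠ ∅) (hx' : stableFinset κ A εb δb r' x' ≠ ∅) :
    hsDiv (εb + εb) (Gfun κ A εb δb x r) (Gfun κ A εb δb x' r') ≤
      δb + Real.exp εb * δb := by
  unfold Gfun
  simp only [if_neg hx, if_neg hx']
  refine hsDiv_avg_left _ _ _ (Finset.nonempty_iff_ne_empty.mpr hx) _ _ ?_
  intro S hS
  refine hsDiv_avg_right _ _ _ (Finset.nonempty_iff_ne_empty.mpr hx') _ _ ?_
  intro S' hS'
  obtain ⟨hScard, hSld⟩ := mem_stableFinset.mp hS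
  obtain ⟨hS'card, hS'ld⟩ := mem_stableFinset.mp hS'
  have hc : ((S ∪ S') ∪ {i}).card ≤ 4 * κ := by
    have h1 := Finset.card_union_le (S ∪ S') {i}
    have h2 := Finset.card_union_le S S'
    rw [Finset.card_singleton] at h1
    omega
  obtain ⟨Tstar, hsub, hcardT⟩ := Finset.exists_superset_card_eq hc
    (by rw [Fintype.card_fin]; exact hn)
  have hSsub : S ⊆ Tstar := fun a ha => hsub (by simp [ha])
  have hS'sub : S' ⊆ Tstar := fun a ha => hsub (by simp [ha])
  have hiT : i ∈ Tstar := hsub (by simp)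
  refine le_trans (hsDiv_triangle εb εb _
    (fun out => out.elim 0 (A (deleteUsers (4 * κ) x Tstar))) _) ?_
  have h1 : hsDiv εb
      (fun out : Option O => ((supersets κ S).card : ℝ)⁻¹ *
        ∑ T ∈ supersets κ S, out.elim 0 (A (deleteUsers (4 * κ) x T)))
      (fun out : Option O => out.elim 0 (A (deleteUsers (4 * κ) x Tstar))) ≤ δb := by
    refine hsDiv_avg_left _ _ _ (supersets_nonempty hn S (by omega)) _ _ ?_
    intro T hT
    rw [hsDiv_option]
    obtain ⟨hTsub, hTcard⟩ := mem_supersets.mp hT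
    exact (hSld T Tstar hTsub hSsub hTcard hcardT).1
  have h2 : hsDiv εb
      (fun out : Option O => out.elim 0 (A (deleteUsers (4 * κ) x Tstar)))
      (fun out : Option O => ((supersets κ S').card : ℝ)⁻¹ *
        ∑ T ∈ supersets κ S', out.elim 0 (A (deleteUsers (4 * κ) x' T))) ≤ δb := by
    rw [deleteUsers_congr (4 * κ) x x' i hi Tstar hiT]
    refine hsDiv_avg_right _ _ _ (supersets_nonempty hn S' (by omega)) _ _ ?_
    intro T' hT'
    rw [hsDiv_option]
    obtain ⟨hT'sub, hT'card⟩ := mem_supersets.mp hT'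
    exact (hS'ld Tstar T' hS'sub hT'sub hcardT hT'card).1
  exact add_le_add h1 (mul_le_mul_of_nonneg_left h2 (Real.exp_pos εb).le)

end Combinatorial
section MainLemma

variable {Z O : Type} [Fintype Z] [Nonempty Z] [Fintype O] {n m : ℕ}

lemma delstab_one_sided (εb δb δ : ℝ) (κ : ℕ) (hεb : 0 < εb) (hδb : 0 < δb)
    (hκ1 : 1 ≤ κ) (hn : 4 * κ ≤ n)
    (htail : Real.exp (-(εb * κ)) ≤ δb)
    (hδ : δb * (3 + Real.exp εb) ≤ δ)
    (A : (Fin (n - 4 * κ) → Fin m → Z) → O → ℝ) (hA : ∀ y, IsPMF (A y))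
    (x x' : Fin n → Fin m → Z) (i : Fin n) (hi : ∀ j, j ≠ i → x j = x' j) :
    hsDiv (εb + (εb + εb)) (DelStab κ A εb δb x) (DelStab κ A εb δb x') ≤ δ := by
  have hi' : ∀ j, j ≠ i → x' j = x j := fun j hj => (hi j hj).symm
  have hn2 : 2 * κ < n := by omega
  set D : ℝ := δb + Real.exp εb * δb with hD
  have hD0 : 0 ≤ D := by positivity
  set c : ℕ → ℝ := fun r => tdlap εb κ r * D + (if r = 0 ∨ r = 2 * κ then δb else 0)
    with hc
  have hc0 : ∀ r, 0 ≤ c r := by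
    intro r
    refine add_nonneg (mul_nonneg (tdlap_nonneg εb κ r) hD0) ?_
    split_ifs <;> linarith [hδb.le]
  -- total cost bound
  have hfinal : ∑ r ∈ Finset.range (2 * κ + 1), c r ≤ δ := by
    have h1 : ∑ r ∈ Finset.range (2 * κ + 1), tdlap εb κ r * D = D := by
      rw [← Finset.sum_mul, tdlap_sum, one_mul]
    have h2 : ∑ r ∈ Finset.range (2 * κ + 1),
        (if r = 0 ∨ r = 2 * κ then δb else 0) ≤ 2 * δb := by
      have hle : ∀ r ∈ Finset.range (2 * κ + 1),
          (if r = 0 ∨ r = 2 * κ then δb else 0) ≤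
          (if r = 0 then δb else 0) + (if r = 2 * κ then δb else 0) := by
        intro r _
        split_ifs <;> simp_all <;> linarith [hδb.le]
      refine le_trans (Finset.sum_le_sum hle) ?_
      rw [Finset.sum_add_distrib,
        Finset.sum_ite_eq' (Finset.range (2 * κ + 1)) 0 (fun _ => δb),
        Finset.sum_ite_eq' (Finset.range (2 * κ + 1)) (2 * κ) (fun _ => δb),
        if_pos (Finset.mem_range.mpr (by omega)),
        if_pos (Finset.mem_range.mpr (by omega))]
      linarith
    simp only [hc]
    rw [Finset.sum_add_distrib, h1]
    rw [hD] at *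
    linarith
  -- crude per-term bound
  have hcrude : ∀ (r : ℕ) (Qf : Option O → ℝ), r ≤ 2 * κ → (∀ out, 0 ≤ Qf out) →
      hsDiv (εb + (εb + εb)) (fun out => tdlap εb κ r * Gfun κ A εb δb x r out) Qf ≤
        tdlap εb κ r := by
    intro r Qf hr hQf
    refine le_trans (hsDiv_le_sum _ _ _
      (fun out => mul_nonneg (tdlap_nonneg εb κ r) (Gfun_nonneg hA out)) hQf) ?_
    rw [← Finset.mul_sum, Gfun_mass hA hn (by omega), mul_one]
  -- matched-⊥ per-term bound
  have hbot : ∀ r s : ℕ, r ≤ 2 * κ → s ≤ 2 * κ → |(r : ℝ) - s| ≤ 1 →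
      stableFinset κ A εb δb r x = ∅ → stableFinset κ A εb δb s x' = ∅ →
      hsDiv (εb + (εb + εb)) (fun out => tdlap εb κ r * Gfun κ A εb δb x r out)
        (fun out => tdlap εb κ s * Gfun κ A εb δb x' s out) ≤ 0 := by
    intro r s hr hs hrs he he'
    have hG1 : Gfun κ A εb δb x r = fun out => if out = none then (1:ℝ) else 0 := by
      funext out; unfold Gfun; rw [if_pos he]
    have hG2 : Gfun κ A εb δb x' s = fun out => if out = none then (1:ℝ) else 0 := by
      funext out; unfold Gfun; rw [if_pos he']
    rw [hG1, hG2]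
    have hind : ∀ out : Option O, (0:ℝ) ≤ if out = none then (1:ℝ) else 0 := by
      intro out; split <;> norm_num
    refine le_trans (hsDiv_scale_le εb (εb + εb) _ _ _ _
      (tdlap_nonneg εb κ r) hind (tdlap_ratio εb κ hεb.le r s hr hs hrs)) ?_
    have hself := hsDiv_self_le (εb + εb) (by positivity)
      (fun out : Option O => if out = none then (1:ℝ) else 0) hind
    calc tdlap εb κ r * hsDiv (εb + εb)
          (fun out : Option O => if out = none then (1:ℝ) else 0)
          (fun out : Option O => if out = none then (1:ℝ) else 0)
        ≤ tdlap εb κ r * 0 := mul_le_mul_of_nonneg_left hself (tdlap_nonneg εb κ r)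
      _ = 0 := mul_zero _
  -- matched-C per-term bound
  have hCC : ∀ r s : ℕ, r ≤ 2 * κ → s ≤ 2 * κ → |(r : ℝ) - s| ≤ 1 → r + s + 1 ≤ 4 * κ →
      stableFinset κ A εb δb r x ≠ ∅ → stableFinset κ A εb δb s x' ≠ ∅ →
      hsDiv (εb + (εb + εb)) (fun out => tdlap εb κ r * Gfun κ A εb δb x r out)
        (fun out => tdlap εb κ s * Gfun κ A εb δb x' s out) ≤ tdlap εb κ r * D := by
    intro r s hr hs hrs hbud hne hne'
    refine le_trans (hsDiv_scale_le εb (εb + εb) _ _ _ _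
      (tdlap_nonneg εb κ r) (Gfun_nonneg hA) (tdlap_ratio εb κ hεb.le r s hr hs hrs)) ?_
    exact mul_le_mul_of_nonneg_left
      (Gfun_close hn x x' i hi r s hbud hne hne') (tdlap_nonneg εb κ r)
  -- monotonicity of nonemptiness in r (same input)
  have hmono : ∀ (y : Fin n → Fin m → Z) (b : ℕ), b ≤ 2 * κ → ∀ a, a ≤ b →
      stableFinset κ A εb δb a y ≠ ∅ → stableFinset κ A εb δb b y ≠ ∅ := by
    intro y b
    induction b with
    | zero =>
      intro _ a ha h
      have h0 : a = 0 := by omega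
      subst h0; exact h
    | succ b ih =>
      intro hb a ha h
      rcases eq_or_lt_of_le ha with h1 | h1
      · subst h1; exact h
      · exact stable_step y y i (fun _ _ => rfl) b (by omega)
          (ih (by omega) a (by omega) h)
  -- threshold r₀ for x
  have hex : ∃ r₀ : ℕ, r₀ ≤ 2 * κ + 1 ∧
      (∀ r, r ≤ 2 * κ → r₀ ≤ r → stableFinset κ A εb δb r x ≠ ∅) ∧
      (∀ r, r < r₀ → stableFinset κ A εb δb r x = ∅) := by
    by_cases h0 : ∃ r, r ≤ 2 * κ ∧ stableFinset κ A εb δb r x ≠ ∅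
    · refine ⟨Nat.find h0, ?_, ?_, ?_⟩
      · exact le_trans (Nat.find_min' h0 h0.choose_spec)
          (le_trans h0.choose_spec.1 (by omega))
      · intro r hr hle
        exact hmono x r hr (Nat.find h0) hle (Nat.find_spec h0).2
      · intro r hlt
        by_contra hne
        have hr2 : r ≤ 2 * κ := by
          have := le_trans (Nat.find_min' h0 h0.choose_spec) h0.choose_spec.1
          omega
        exact absurd (Nat.find_min' h0 ⟨hr2, hne⟩) (by omega)
    · push_neg at h0
      exact ⟨2 * κ + 1, le_rfl, fun r hr hle => by omega,
        fun r hlt => h0 r (by omega)⟩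
  obtain ⟨r₀, hr₀le, hr₀pos, hr₀neg⟩ := hex
  rw [DelStab_eq_Gfun, DelStab_eq_Gfun]
  by_cases hCA : ∀ r, r₀ ≤ r → r ≤ 2 * κ → stableFinset κ A εb δb r x' ≠ ∅
  · -- scheme A : shift the ⊥-block down by one
    refine le_trans (hsDiv_assembly (εb + (εb + εb)) (Finset.range (2 * κ + 1))
      (tdlap εb κ) (tdlap εb κ)
      (fun r => Gfun κ A εb δb x r) (fun r => Gfun κ A εb δb x' r)
      (fun r => if r < r₀ then (if r = 0 then 2 * κ + 1 else r - 1) else r) c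
      ?_ ?_ ?_) hfinal
    · intro k _ o
      exact mul_nonneg (tdlap_nonneg εb κ k) (Gfun_nonneg hA o)
    · intro a ha hσa b hb hσb heq
      simp only [Finset.mem_range] at ha hb hσa hσb
      split_ifs at hσa hσb heq <;> omega
    · intro r hrK
      have hr : r ≤ 2 * κ := by
        simp only [Finset.mem_range] at hrK; omega
      by_cases h1 : r < r₀
      · by_cases h2 : r = 0
        · -- unmatched boundary term, crude bound via tail
          simp only [if_pos h1, if_pos h2]
          have hσ : ¬ ((2 * κ + 1) ∈ Finset.range (2 * κ + 1)) := by
            simp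
          simp only [if_neg hσ]
          refine le_trans (hcrude r _ hr (fun out => le_rfl)) ?_
          have hple : tdlap εb κ r ≤ δb := by
            rw [h2]; exact le_trans (tdlap_zero_le εb κ) htail
          simp only [hc, if_pos (Or.inl h2)]
          have := mul_nonneg (tdlap_nonneg εb κ r) hD0
          linarith
        · -- matched ⊥ ↔ ⊥ with shift down
          simp only [if_pos h1, if_neg h2]
          have hσK : r - 1 ∈ Finset.range (2 * κ + 1) := by
            simp only [Finset.mem_range]; omega
          simp only [if_pos hσK]
          have habs : |(r : ℝ) - ((r - 1 : ℕ) : ℝ)| ≤ 1 := by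
            rw [Nat.cast_sub (by omega)]
            push_cast
            rw [show (r : ℝ) - ((r : ℝ) - 1) = 1 by ring, abs_one]
          have he : stableFinset κ A εb δb r x = ∅ := hr₀neg r h1
          have he' : stableFinset κ A εb δb (r - 1) x' = ∅ := by
            by_contra hne
            have hst := stable_step x' x i hi' (r - 1) (by omega) hne
            rw [Nat.sub_add_cancel (by omega)] at hst
            exact hst he
          exact le_trans (hbot r (r - 1) hr (by omega) habs he he') (hc0 r)
      · by_cases h2 : r = 2 * κ
        · -- top boundary term, crude bound via tail
          refine le_trans (hcrude r _ hr ?_) ?_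
          · intro out
            split_ifs <;>
              first
                | exact le_rfl
                | exact mul_nonneg (tdlap_nonneg εb κ _) (Gfun_nonneg hA out)
          · have hple : tdlap εb κ r ≤ δb := by
              rw [h2]; exact le_trans (tdlap_two_le εb κ) htail
            simp only [hc, if_pos (Or.inr h2)]
            have := mul_nonneg (tdlap_nonneg εb κ r) hD0
            linarith
        · -- matched C ↔ C, same level
          simp only [if_neg h1]
          have hσK : r ∈ Finset.range (2 * κ + 1) := hrK
          simp only [if_pos hσK]
          have hne : stableFinset κ A εb δb r x ≠ ∅ := hr₀pos r hr (by omega)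
          have hne' : stableFinset κ A εb δb r x' ≠ ∅ := hCA r (by omega) hr
          have habs : |(r : ℝ) - (r : ℝ)| ≤ 1 := by simp
          refine le_trans (hCC r r hr hr habs (by omega) hne hne') ?_
          simp only [hc]
          refine le_add_of_nonneg_right ?_
          split_ifs <;> linarith [hδb.le]
  · -- scheme B : shift the C-block up by one
    push_neg at hCA
    obtain ⟨rs, hrs1, hrs2, hrs3⟩ := hCA
    have hB : ∀ r, r < r₀ → stableFinset κ A εb δb r x' = ∅ := by
      intro r hlt
      by_contra hne
      exact (hmono x' rs hrs2 r (by omega) hne) hrs3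
    refine le_trans (hsDiv_assembly (εb + (εb + εb)) (Finset.range (2 * κ + 1))
      (tdlap εb κ) (tdlap εb κ)
      (fun r => Gfun κ A εb δb x r) (fun r => Gfun κ A εb δb x' r)
      (fun r => if r < r₀ then r else r + 1) c
      ?_ ?_ ?_) hfinal
    · intro k _ o
      exact mul_nonneg (tdlap_nonneg εb κ k) (Gfun_nonneg hA o)
    · intro a ha hσa b hb hσb heq
      simp only [Finset.mem_range] at ha hb hσa hσb
      split_ifs at hσa hσb heq <;> omega
    · intro r hrK
      have hr : r ≤ 2 * κ := by
        simp only [Finset.mem_range] at hrK; omega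
      by_cases h1 : r < r₀
      · -- matched ⊥ ↔ ⊥, same level
        simp only [if_pos h1]
        have hσK : r ∈ Finset.range (2 * κ + 1) := hrK
        simp only [if_pos hσK]
        have habs : |(r : ℝ) - (r : ℝ)| ≤ 1 := by simp
        exact le_trans (hbot r r hr hr habs (hr₀neg r h1) (hB r h1)) (hc0 r)
      · by_cases h2 : r = 2 * κ
        · -- top boundary term, crude bound via tail
          refine le_trans (hcrude r _ hr ?_) ?_
          · intro out
            split_ifs <;>
              first
                | exact le_rfl
                | exact mul_nonneg (tdlap_nonneg εb κ _) (Gfun_nonneg hA out)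
          · have hple : tdlap εb κ r ≤ δb := by
              rw [h2]; exact le_trans (tdlap_two_le εb κ) htail
            simp only [hc, if_pos (Or.inr h2)]
            have := mul_nonneg (tdlap_nonneg εb κ r) hD0
            linarith
        · -- matched C ↔ C with shift up
          simp only [if_neg h1]
          have hσK : r + 1 ∈ Finset.range (2 * κ + 1) := by
            simp only [Finset.mem_range]; omega
          simp only [if_pos hσK]
          have hne : stableFinset κ A εb δb r x ≠ ∅ := hr₀pos r hr (by omega)
          have hne' : stableFinset κ A εb δb (r + 1) x' ≠ ∅ :=
            stable_step x x' i hi r (by omega) hne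
          have habs : |(r : ℝ) - ((r + 1 : ℕ) : ℝ)| ≤ 1 := by
            push_cast
            rw [show (r : ℝ) - ((r : ℝ) + 1) = -1 by ring, abs_neg, abs_one]
          refine le_trans (hCC r (r + 1) hr (by omega) habs (by omega) hne hne') ?_
          simp only [hc]
          refine le_add_of_nonneg_right ?_
          split_ifs <;> linarith [hδb.le]

end MainLemma
/-- Privacy guarantee: `DelStab_{ε,δ,A}` is `(ε,δ)`-user-level DP. -/
theorem delstab_user_level_dp (Z O : Type) [Fintype Z] [Nonempty Z] [Fintype O]
    (ε δ : ℝ) (hε0 : 0 < ε) (hε1 : ε < 1) (hδ0 : 0 < δ) (hδ1 : δ < 1)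
    (εb δb : ℝ) (κ : ℕ)
    (hεb : εb = ε / 3)
    (hδb : δb = δ / (Real.exp (2 * εb) + Real.exp εb + 2))
    (hκ : κ = 1 + Nat.ceil (Real.log (1 / δb) / εb))
    (m n : ℕ) (hm : 1 ≤ m) (hn : 4 * κ ≤ n)
    (A : (Fin (n - 4 * κ) → Fin m → Z) → O → ℝ) (hA : ∀ y, IsPMF (A y))
    (x x' : Fin n → Fin m → Z) (hxx : UserNeighbor x x') :
    Indis ε δ (DelStab κ A εb δb x) (DelStab κ A εb δb x') := by
  obtain ⟨i, hi⟩ := hxx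
  have hεb0 : 0 < εb := by rw [hεb]; linarith
  have hδb0 : 0 < δb := by
    rw [hδb]
    have hDen : (0:ℝ) < Real.exp (2 * εb) + Real.exp εb + 2 := by positivity
    positivity
  have hκ1 : 1 ≤ κ := hκ ▸ Nat.le_add_right 1 _
  have htail : Real.exp (-(εb * κ)) ≤ δb := by
    have h2 : Real.log (1 / δb) / εb ≤ (Nat.ceil (Real.log (1 / δb) / εb) : ℝ) :=
      Nat.le_ceil _
    rw [div_le_iff₀ hεb0] at h2
    have h4 : (κ : ℝ) = 1 + (Nat.ceil (Real.log (1 / δb) / εb) : ℝ) := by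
      rw [hκ]; push_cast; ring
    have h1 : Real.log (1 / δb) ≤ εb * κ := by
      rw [h4]
      nlinarith [hεb0.le]
    calc Real.exp (-(εb * κ)) ≤ Real.exp (-Real.log (1 / δb)) :=
          Real.exp_le_exp.mpr (by linarith)
      _ = δb := by rw [one_div, Real.log_inv, neg_neg, Real.exp_log hδb0]
  have hδsum : δb * (3 + Real.exp εb) ≤ δ := by
    have hDen : (0:ℝ) < Real.exp (2 * εb) + Real.exp εb + 2 := by positivity
    have hδeq : δb * (Real.exp (2 * εb) + Real.exp εb + 2) = δ := by
      rw [hδb]; field_simp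
    have h5 : (3:ℝ) + Real.exp εb ≤ Real.exp (2 * εb) + Real.exp εb + 2 := by
      have := Real.one_le_exp (by linarith : (0:ℝ) ≤ 2 * εb)
      linarith
    nlinarith [hδb0.le]
  have hεeq : ε = εb + (εb + εb) := by rw [hεb]; ring
  constructor
  · rw [hεeq]
    exact delstab_one_sided εb δb δ κ hεb0 hδb0 hκ1 hn htail hδsum A hA x x' i hi
  · rw [hεeq]
    exact delstab_one_sided εb δb δ κ hεb0 hδb0 hκ1 hn htail hδsum A hA x' x i
      (fun j hj => (hi j hj).symm)
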